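/- Let r ≥ 1, let Δ_1, …, Δ_r > 0, let X = (X_1, …, X_r) be an ℝ^r-valued random vector, and let ξ = (ξ_1, …, ξ_r) be an ℝ^r-valued random vector independent of X whose coordinates ξ_i are mutually independent with ξ_i uniformly distributed on [−Δ_i/2, Δ_i/2]. Define η_i = Q_{Δ_i}(X_i + ξ_i) − ξ_i − X_i for i = 1, …, r. Then the coordinates η_1, …, η_r are mutually independent, each η_i is uniformly distributed on [−Δ_i/2, Δ_i/2], and the random vector η = (η_1, …, η_r) is independent of X. -/

import Mathlib

open MeasureTheory ProbabilityTheory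

/-- The uniform quantizer with step size `Δ`: `Q_Δ(x) = Δ·⌊x/Δ + 1/2⌋`. -/
noncomputable def uniformQuantizer (Δ : ℝ) (x : ℝ) : ℝ := Δ * ⌊x / Δ + 1 / 2⌋

/-- The uniform probability measure on the interval `[-Δ/2, Δ/2]`. -/
noncomputable def uniformDitherMeasure (Δ : ℝ) : Measure ℝ :=
  (ENNReal.ofReal Δ)⁻¹ • volume.restrict (Set.Icc (-(Δ / 2)) (Δ / 2))

section Aux
open Set

lemma quantErr_eq {Δ : ℝ} (hΔ : 0 < Δ) (y : ℝ) :
    uniformQuantizer Δ y - y = -(toIcoMod hΔ (-(Δ/2)) y) := by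
  rw [toIcoMod, toIcoDiv_eq_floor, uniformQuantizer, zsmul_eq_mul]
  have : (y - -(Δ/2)) / Δ = y / Δ + 1 / 2 := by rw [div_add_div _ _ (ne_of_gt hΔ) two_ne_zero, div_eq_div_iff (ne_of_gt hΔ) (by positivity)]; ring
  rw [this]; ring

lemma measurable_uQ {Δ : ℝ} : Measurable (fun y => uniformQuantizer Δ y - y) := by
  unfold uniformQuantizer
  exact ((measurable_const.mul ((measurable_from_top.comp
    ((measurable_id.div_const Δ).add_const (1/2)).floor))).sub measurable_id)

lemma dither_prob {Δ : ℝ} (hΔ : 0 < Δ) : IsProbabilityMeasure (uniformDitherMeasure Δ) := by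
  constructor
  rw [uniformDitherMeasure, Measure.smul_apply, Measure.restrict_apply MeasurableSet.univ,
    Set.univ_inter, Real.volume_Icc, smul_eq_mul]
  rw [show Δ/2 - -(Δ/2) = Δ by ring]
  rw [ENNReal.inv_mul_cancel (by simpa using hΔ) ENNReal.ofReal_ne_top]

lemma map_dither {Δ : ℝ} (hΔ : 0 < Δ) (x : ℝ) :
    Measure.map (fun u => uniformQuantizer Δ (x + u) - u - x) (uniformDitherMeasure Δ)
      = uniformDitherMeasure Δ := by
  haveI : Fact (0 < Δ) := ⟨hΔ⟩
  set a : ℝ := -(Δ/2) with ha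
  have haΔ : a + Δ = Δ/2 := by rw [ha]; ring
  have hIoc : uniformDitherMeasure Δ
      = (ENNReal.ofReal Δ)⁻¹ • volume.restrict (Set.Ioc a (a + Δ)) := by
    rw [uniformDitherMeasure, haΔ, Measure.restrict_congr_set Ioc_ae_eq_Icc]
  have hIco : uniformDitherMeasure Δ
      = (ENNReal.ofReal Δ)⁻¹ • volume.restrict (Set.Ico a (a + Δ)) := by
    rw [uniformDitherMeasure, haΔ, Measure.restrict_congr_set Ico_ae_eq_Icc]
  have hfun : (fun u => uniformQuantizer Δ (x + u) - u - x)
      = (fun u : ℝ => -(toIcoMod hΔ a (x + u))) := by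
    funext u
    have := quantErr_eq hΔ (x + u)
    rw [ha]; linarith
  set L : AddCircle Δ → ℝ := fun z => ((AddCircle.equivIco Δ a z : ℝ)) with hL
  have hLmk : ∀ y : ℝ, L ((y : ℝ) : AddCircle Δ) = toIcoMod hΔ a y := by
    intro y
    rw [hL]
    simp only [AddCircle.equivIco, QuotientAddGroup.equivIcoMod_coe]
  have hLmeas : Measurable L := by
    have : L = (fun p : Set.Ico a (a + Δ) => (p : ℝ)) ∘ (AddCircle.measurableEquivIco Δ a) := rfl
    rw [this]
    exact measurable_subtype_coe.comp (AddCircle.measurableEquivIco Δ a).measurable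
  have hmk : Measurable ((↑) : ℝ → AddCircle Δ) := AddCircle.measurable_mk'
  have hcomp : (fun u : ℝ => -(toIcoMod hΔ a (x + u)))
      = (fun w : ℝ => -w) ∘ (L ∘ ((fun z : AddCircle Δ => ((x : ℝ) : AddCircle Δ) + z)
        ∘ ((↑) : ℝ → AddCircle Δ))) := by
    funext u
    simp only [Function.comp_apply]
    rw [← AddCircle.coe_add, hLmk]
  have m1 : Measurable (fun z : AddCircle Δ => ((x : ℝ) : AddCircle Δ) + z) :=
    measurable_id.const_add _
  have key : Measure.map (fun u => uniformQuantizer Δ (x + u) - u - x)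
      (volume.restrict (Set.Ioc a (a + Δ))) = volume.restrict (Set.Ico a (a + Δ)) := by
    rw [hfun, hcomp]
    rw [← Measure.map_map measurable_neg (hLmeas.comp (m1.comp hmk)),
      ← Measure.map_map hLmeas (m1.comp hmk),
      ← Measure.map_map m1 hmk]
    rw [(AddCircle.measurePreserving_mk Δ a).map_eq]
    rw [(measurePreserving_add_left (volume : Measure (AddCircle Δ)) _).map_eq]
    rw [← (AddCircle.measurePreserving_mk Δ a).map_eq,
      Measure.map_map hLmeas hmk]
    have hid : Measure.map (L ∘ ((↑) : ℝ → AddCircle Δ)) (volume.restrict (Set.Ioc a (a + Δ)))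
        = volume.restrict (Set.Ioc a (a + Δ)) := by
      rw [show L ∘ ((↑) : ℝ → AddCircle Δ) = fun y => toIcoMod hΔ a y from funext hLmk]
      have h0 : (fun y => toIcoMod hΔ a y) =ᵐ[volume.restrict (Set.Ioc a (a + Δ))] id := by
        rw [Filter.EventuallyEq, ae_restrict_iff' measurableSet_Ioc]
        have h1 : ∀ᵐ y : ℝ ∂volume, y ≠ a + Δ := by
          rw [ae_iff]; simp only [not_not]
          exact measure_singleton _
        filter_upwards [h1] with y hy hmem
        exact (toIcoMod_eq_self hΔ).2 ⟨hmem.1.le, lt_of_le_of_ne hmem.2 hy⟩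
      rw [Measure.map_congr h0, Measure.map_id]
    rw [hid]
    have hres := Measure.restrict_map (f := fun w : ℝ => -w) measurable_neg
      (s := Set.Ico a (a + Δ)) (μ := (volume : Measure ℝ)) measurableSet_Ico
    rw [show Measure.map (fun w : ℝ => -w) (volume : Measure ℝ) = volume from
      Measure.map_neg_eq_self volume] at hres
    rw [hres]
    congr 1
    rw [show (fun w : ℝ => -w) ⁻¹' Set.Ico a (a + Δ) = -Set.Ico a (a + Δ) from rfl,
      Set.neg_Ico]
    rw [ha]; congr 1 <;> ring
  rw [hIoc, Measure.map_smul, key,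
    Measure.restrict_congr_set Ico_ae_eq_Icc, Measure.restrict_congr_set Ioc_ae_eq_Icc]

lemma map_eq_pi {Ω : Type*} [MeasurableSpace Ω] (P : Measure Ω) [IsProbabilityMeasure P]
    {r : ℕ} (ξ : Ω → Fin r → ℝ) (hξ : Measurable ξ)
    (hcoords : iIndepFun (fun i ω => ξ ω i) P)
    (ν : Fin r → Measure ℝ) [∀ i, IsProbabilityMeasure (ν i)]
    (hmarg : ∀ i, Measure.map (fun ω => ξ ω i) P = ν i) :
    Measure.map ξ P = Measure.pi ν := by
  refine (Measure.pi_eq fun s hs => ?_).symm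
  rw [Measure.map_apply hξ (MeasurableSet.univ_pi hs)]
  have hpre : ξ ⁻¹' Set.pi Set.univ s = ⋂ i ∈ (Finset.univ : Finset (Fin r)),
      (fun ω => ξ ω i) ⁻¹' s i := by
    ext ω; simp [Set.mem_pi]
  rw [hpre, hcoords.measure_inter_preimage_eq_mul Finset.univ (fun i _ => hs i)]
  refine Finset.prod_congr rfl fun i _ => ?_
  rw [← hmarg i, Measure.map_apply (hξ.eval) (hs i)]

lemma measurable_err {Δ : ℝ} (c : ℝ) :
    Measurable (fun u : ℝ => uniformQuantizer Δ (c + u) - u - c) := by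
  have h : (fun u : ℝ => uniformQuantizer Δ (c + u) - u - c)
      = (fun y => uniformQuantizer Δ y - y) ∘ (fun u => c + u) := by
    funext u; simp only [Function.comp_apply]; ring
  rw [h]
  exact measurable_uQ.comp (measurable_const.add measurable_id)

lemma mp_pi {r : ℕ} (Δ : Fin r → ℝ) (hΔ : ∀ i, 0 < Δ i) (x : Fin r → ℝ) :
    MeasurePreserving
      (fun u : Fin r → ℝ => fun i => uniformQuantizer (Δ i) (x i + u i) - u i - x i)
      (Measure.pi fun i => uniformDitherMeasure (Δ i))
      (Measure.pi fun i => uniformDitherMeasure (Δ i)) := by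
  haveI : ∀ i, IsProbabilityMeasure (uniformDitherMeasure (Δ i)) := fun i => dither_prob (hΔ i)
  exact measurePreserving_pi _ _ (fun i => ⟨measurable_err (x i), map_dither (hΔ i) (x i)⟩)

lemma pi_finset_pi {r : ℕ} (ν : Fin r → Measure ℝ) [∀ i, IsProbabilityMeasure (ν i)]
    (S : Finset (Fin r)) (sets : Fin r → Set ℝ) (h : ∀ i ∈ S, MeasurableSet (sets i)) :
    Measure.pi ν (Set.pi ↑S sets) = ∏ i ∈ S, ν i (sets i) := by
  classical
  have h1 : Set.pi ↑S sets = Set.pi Set.univ (fun j => if j ∈ S then sets j else Set.univ) := by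
    ext x
    simp only [Set.mem_pi, Set.mem_univ, true_implies, Finset.coe_sort_coe, Finset.mem_coe]
    constructor
    · intro hx j
      by_cases hj : j ∈ S
      · rw [if_pos hj]; exact hx j hj
      · rw [if_neg hj]; trivial
    · intro hx j hj
      have := hx j; rwa [if_pos hj] at this
  rw [h1, Measure.pi_pi]
  have h2 : ∀ j ∈ Finset.univ, ν j (if j ∈ S then sets j else Set.univ)
      = if j ∈ S then ν j (sets j) else 1 := by
    intro j _
    by_cases hj : j ∈ S
    · simp [hj]
    · simp [hj]
  rw [Finset.prod_congr rfl h2, Finset.prod_ite_mem, Finset.univ_inter]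

lemma pi_map_eval {r : ℕ} (ν : Fin r → Measure ℝ) [∀ i, IsProbabilityMeasure (ν i)] (i : Fin r) :
    Measure.map (fun x : Fin r → ℝ => x i) (Measure.pi ν) = ν i := by
  refine Measure.ext fun s hs => ?_
  rw [Measure.map_apply (measurable_pi_apply i) hs]
  have h1 : (fun x : Fin r → ℝ => x i) ⁻¹' s = Set.pi ↑({i} : Finset (Fin r)) (fun _ => s) := by
    ext x; simp [Set.mem_pi]
  rw [h1, pi_finset_pi ν _ _ (fun _ _ => hs), Finset.prod_singleton]

end Aux

/-- Coordinatewise dithered uniform quantization: if the dither vector `ξ` is independent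
of `X` and has mutually independent coordinates, `ξ i` being uniform on `[-Δ i/2, Δ i/2]`,
then the quantization errors `η i = Q_{Δ i}(X i + ξ i) − ξ i − X i` are mutually
independent, each `η i` is uniform on `[-Δ i/2, Δ i/2]`, and the error vector `η` is
independent of `X`. -/

theorem stmt_2 {Ω : Type*} [MeasurableSpace Ω] (P : Measure Ω) [IsProbabilityMeasure P]
    (r : ℕ) (hr : 1 ≤ r) (Δ : Fin r → ℝ) (hΔ : ∀ i, 0 < Δ i)
    (X ξ : Ω → Fin r → ℝ) (hX : Measurable X) (hξ : Measurable ξ)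
    (hindep : IndepFun X ξ P)
    (hcoords : iIndepFun (fun i ω => ξ ω i) P)
    (hunif : ∀ i, Measure.map (fun ω => ξ ω i) P = uniformDitherMeasure (Δ i)) :
    iIndepFun
        (fun i ω => uniformQuantizer (Δ i) (X ω i + ξ ω i) - ξ ω i - X ω i) P ∧
      (∀ i, Measure.map (fun ω => uniformQuantizer (Δ i) (X ω i + ξ ω i) - ξ ω i - X ω i) P
          = uniformDitherMeasure (Δ i)) ∧
      IndepFun (fun ω i => uniformQuantizer (Δ i) (X ω i + ξ ω i) - ξ ω i - X ω i) X P := by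
  classical
  set ν : Fin r → Measure ℝ := fun i => uniformDitherMeasure (Δ i) with hνdef
  haveI : ∀ i, IsProbabilityMeasure (ν i) := fun i => dither_prob (hΔ i)
  set η : Ω → Fin r → ℝ :=
    fun ω i => uniformQuantizer (Δ i) (X ω i + ξ ω i) - ξ ω i - X ω i with hηdef
  have hηmeas : Measurable η := by
    refine measurable_pi_iff.2 fun i => ?_
    have h : (fun ω => η ω i)
        = (fun y => uniformQuantizer (Δ i) y - y) ∘ (fun ω => X ω i + ξ ω i) := by
      funext ω; simp only [hηdef, Function.comp_apply]; ring
    rw [h]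
    exact measurable_uQ.comp (hX.eval.add hξ.eval)
  set F : (Fin r → ℝ) × (Fin r → ℝ) → Fin r → ℝ :=
    fun p i => uniformQuantizer (Δ i) (p.1 i + p.2 i) - p.2 i - p.1 i with hFdef
  have hFmeas : Measurable F := by
    refine measurable_pi_iff.2 fun i => ?_
    have h : (fun p : (Fin r → ℝ) × (Fin r → ℝ) => F p i)
        = (fun y => uniformQuantizer (Δ i) y - y) ∘ (fun p : (Fin r → ℝ) × (Fin r → ℝ) =>
            p.1 i + p.2 i) := by
      funext p; simp only [hFdef, Function.comp_apply]; ring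
    rw [h]
    exact measurable_uQ.comp (measurable_fst.eval.add measurable_snd.eval)
  set T : (Fin r → ℝ) × (Fin r → ℝ) → (Fin r → ℝ) × (Fin r → ℝ) :=
    fun p => (F p, p.1) with hTdef
  have hT : Measurable T := hFmeas.prodMk measurable_fst
  set μX : Measure (Fin r → ℝ) := Measure.map X P with hμX
  haveI : IsProbabilityMeasure μX := Measure.isProbabilityMeasure_map hX.aemeasurable
  have hpair : Measure.map (fun ω => (X ω, ξ ω)) P = μX.prod (Measure.map ξ P) :=
    (indepFun_iff_map_prod_eq_prod_map_map hX.aemeasurable hξ.aemeasurable).1 hindep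
  have hξpi : Measure.map ξ P = Measure.pi ν := map_eq_pi P ξ hξ hcoords ν hunif
  have hmapT : Measure.map T (μX.prod (Measure.pi ν)) = (Measure.pi ν).prod μX := by
    refine (Measure.prod_eq fun s t hs ht => ?_).symm
    rw [Measure.map_apply hT (hs.prod ht), Measure.prod_apply (hT (hs.prod ht))]
    have hfib : ∀ x : Fin r → ℝ, (Measure.pi ν) (Prod.mk x ⁻¹' (T ⁻¹' (s ×ˢ t)))
        = Set.indicator t (fun _ => Measure.pi ν s) x := by
      intro x
      by_cases hx : x ∈ t
      · rw [Set.indicator_of_mem hx]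
        have h1 : Prod.mk x ⁻¹' (T ⁻¹' (s ×ˢ t)) = (fun u => F (x, u)) ⁻¹' s := by
          ext u; simp [hTdef, Set.mem_prod, hx]
        rw [h1, ← Measure.map_apply (mp_pi Δ hΔ x).measurable hs, (mp_pi Δ hΔ x).map_eq]
      · rw [Set.indicator_of_notMem hx]
        have h1 : Prod.mk x ⁻¹' (T ⁻¹' (s ×ˢ t)) = ∅ := by
          ext u; simp [hTdef, Set.mem_prod, hx]
        rw [h1]; simp
    rw [lintegral_congr hfib, lintegral_indicator ht, setLIntegral_const]
  have hηX : Measure.map (fun ω => (η ω, X ω)) P = (Measure.pi ν).prod μX := by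
    have hc : (fun ω => (η ω, X ω)) = T ∘ (fun ω => (X ω, ξ ω)) := rfl
    rw [hc, ← Measure.map_map hT (hX.prodMk hξ), hpair, hξpi, hmapT]
  have hηpi : Measure.map η P = Measure.pi ν := by
    have hc : η = Prod.fst ∘ (fun ω => (η ω, X ω)) := rfl
    rw [hc, ← Measure.map_map measurable_fst (hηmeas.prodMk hX), hηX, Measure.map_fst_prod]
    simp
  have hmarg : ∀ i, Measure.map (fun ω => η ω i) P = ν i := by
    intro i
    have hc : (fun ω => η ω i) = (fun x : Fin r → ℝ => x i) ∘ η := rfl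
    rw [hc, ← Measure.map_map (measurable_pi_apply i) hηmeas, hηpi, pi_map_eval]
  refine ⟨?_, hmarg, ?_⟩
  · rw [iIndepFun_iff_measure_inter_preimage_eq_mul]
    intro S sets H
    have h1 : ⋂ i ∈ S, (fun ω => η ω i) ⁻¹' sets i = η ⁻¹' Set.pi ↑S sets := by
      ext ω; simp [Set.mem_pi]
    have hSmeas : MeasurableSet (Set.pi (↑S : Set (Fin r)) sets) :=
      MeasurableSet.pi (Set.to_countable _) (fun i hi => H i hi)
    rw [h1, ← Measure.map_apply hηmeas hSmeas, hηpi, pi_finset_pi ν S sets H]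
    refine (Finset.prod_congr rfl fun i hi => ?_).symm
    rw [← hmarg i, Measure.map_apply hηmeas.eval (H i hi)]
  · exact (indepFun_iff_map_prod_eq_prod_map_map hηmeas.aemeasurable hX.aemeasurable).2
      (by rw [hηX, hηpi])
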